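/- Let A_0, A_1, …, A_L ∈ ℂ^{n×n} and let 𝒜 ∈ ℂ^{n(L+1)×n(L+1)} be the associated delay block matrix. For every nonzero complex number λ, λ is an eigenvalue of 𝒜 if and only if λ is an eigenvalue of the matrix ∑_{ℓ=0}^L λ^{−ℓ} A_ℓ ∈ ℂ^{n×n}. -/

import Mathlib

open Matrix BigOperators

/-- The delay block matrix associated to complex matrices `A 0, …, A L`: first block
row `(A 0  A 1 ⋯ A L)`, identity matrices on the block subdiagonal, zeros elsewhere. -/
def delayBlockC {n L : ℕ} (A : Fin (L + 1) → Matrix (Fin n) (Fin n) ℂ) :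
    Matrix (Fin n × Fin (L + 1)) (Fin n × Fin (L + 1)) ℂ :=
  fun p q =>
    if (p.2 : ℕ) = 0 then A q.2 p.1 q.1
    else if p.1 = q.1 ∧ (q.2 : ℕ) + 1 = (p.2 : ℕ) then 1 else 0

lemma delay_mulVec_zero {n L : ℕ} (A : Fin (L + 1) → Matrix (Fin n) (Fin n) ℂ)
    (v : Fin n × Fin (L + 1) → ℂ) (i : Fin n) (j : Fin (L + 1)) (hj : (j : ℕ) = 0) :
    (delayBlockC A *ᵥ v) (i, j) = ∑ q : Fin n × Fin (L + 1), A q.2 i q.1 * v q := by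
  simp only [Matrix.mulVec, dotProduct, delayBlockC, hj, if_true, ite_true]

lemma delay_mulVec_succ {n L : ℕ} (A : Fin (L + 1) → Matrix (Fin n) (Fin n) ℂ)
    (v : Fin n × Fin (L + 1) → ℂ) (i : Fin n) (m : ℕ) (hm : m + 1 < L + 1) :
    (delayBlockC A *ᵥ v) (i, ⟨m + 1, hm⟩) = v (i, ⟨m, Nat.lt_of_succ_lt hm⟩) := by
  show ∑ q : Fin n × Fin (L + 1), delayBlockC A (i, ⟨m + 1, hm⟩) q * v q = _
  rw [Fintype.sum_eq_single ((i, ⟨m, Nat.lt_of_succ_lt hm⟩) : Fin n × Fin (L + 1))]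
  · simp [delayBlockC]
  · rintro ⟨k, ℓ⟩ hq
    simp only [delayBlockC]
    rw [if_neg (by simp), if_neg, zero_mul]
    rintro ⟨h1, h2⟩
    apply hq
    simp only [Prod.mk.injEq]
    exact ⟨h1.symm, by apply Fin.ext; simpa using Nat.succ_injective h2⟩

theorem stmt3 {n L : ℕ} (A : Fin (L + 1) → Matrix (Fin n) (Fin n) ℂ)
    (lam : ℂ) (hlam : lam ≠ 0) :
    (delayBlockC A - lam • (1 : Matrix (Fin n × Fin (L + 1)) (Fin n × Fin (L + 1)) ℂ)).det = 0 ↔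
      ((∑ ℓ : Fin (L + 1), (lam ^ (ℓ : ℕ))⁻¹ • A ℓ) -
        lam • (1 : Matrix (Fin n) (Fin n) ℂ)).det = 0 := by
  have h0 : (0 : ℕ) < L + 1 := Nat.succ_pos _
  rw [← Matrix.exists_mulVec_eq_zero_iff, ← Matrix.exists_mulVec_eq_zero_iff]
  constructor
  · rintro ⟨v, hv, hvz⟩
    have key : ∀ p, (delayBlockC A *ᵥ v) p = lam * v p := by
      intro p
      have h := congrFun hvz p
      simp only [Matrix.sub_mulVec, Matrix.smul_mulVec, Matrix.one_mulVec,
        Pi.sub_apply, Pi.smul_apply, Pi.zero_apply, smul_eq_mul, sub_eq_zero] at h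
      exact h
    have hrec : ∀ m (hm : m < L + 1) i, v (i, ⟨m, hm⟩) = (lam ^ m)⁻¹ * v (i, ⟨0, h0⟩) := by
      intro m
      induction m with
      | zero => intro hm i; simp
      | succ m ih =>
        intro hm i
        have h1 := key (i, ⟨m + 1, hm⟩)
        rw [delay_mulVec_succ A v i m hm, ih (Nat.lt_of_succ_lt hm) i] at h1
        have h2 : v (i, ⟨m + 1, hm⟩) = lam⁻¹ * ((lam ^ m)⁻¹ * v (i, ⟨0, h0⟩)) := by
          rw [h1, inv_mul_cancel_left₀ hlam]
        rw [h2, pow_succ, mul_inv]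
        ring
    refine ⟨fun i => v (i, ⟨0, h0⟩), ?_, ?_⟩
    · intro hx
      apply hv
      funext p
      have hp := hrec (p.2 : ℕ) p.2.isLt p.1
      simp only [Fin.eta] at hp
      have hx0 : v (p.1, ⟨0, h0⟩) = 0 := by
        have := congrFun hx p.1
        simpa using this
      rw [show p = (p.1, p.2) from rfl, hp, hx0]
      simp
    · funext i
      have h1 := key (i, ⟨0, h0⟩)
      rw [delay_mulVec_zero A v i ⟨0, h0⟩ rfl] at h1
      have h2 : ∀ q : Fin n × Fin (L + 1), v q = (lam ^ (q.2 : ℕ))⁻¹ * v (q.1, ⟨0, h0⟩) := by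
        rintro ⟨k, ℓ⟩
        have := hrec (ℓ : ℕ) ℓ.isLt k
        simpa [Fin.eta] using this
      rw [Matrix.sub_mulVec, Matrix.smul_mulVec, Matrix.one_mulVec]
      simp only [Pi.sub_apply, Pi.smul_apply, Pi.zero_apply, smul_eq_mul, sub_eq_zero]
      simp only [Matrix.mulVec, dotProduct, Matrix.sum_apply, Matrix.smul_apply,
        smul_eq_mul, Finset.sum_mul]
      rw [← h1, Fintype.sum_prod_type_right, Finset.sum_comm]
      refine Finset.sum_congr rfl fun ℓ _ => Finset.sum_congr rfl fun k _ => ?_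
      rw [h2 (k, ℓ)]
      ring
  · rintro ⟨x, hx, hxz⟩
    obtain ⟨i0, hi0⟩ := Function.ne_iff.mp hx
    refine ⟨fun p => (lam ^ (p.2 : ℕ))⁻¹ * x p.1, ?_, ?_⟩
    · intro h
      apply hi0
      have := congrFun h (i0, ⟨0, h0⟩)
      simpa using this
    · funext p
      obtain ⟨i, j⟩ := p
      simp only [Matrix.sub_mulVec, Matrix.smul_mulVec, Matrix.one_mulVec,
        Pi.sub_apply, Pi.smul_apply, Pi.zero_apply, smul_eq_mul, sub_eq_zero]
      rcases Nat.eq_zero_or_pos (j : ℕ) with hj | hj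
      · rw [delay_mulVec_zero A _ i j hj]
        have hS := congrFun hxz i
        rw [Matrix.sub_mulVec, Matrix.smul_mulVec, Matrix.one_mulVec] at hS
        simp only [Pi.sub_apply, Pi.smul_apply, Pi.zero_apply, smul_eq_mul,
          sub_eq_zero] at hS
        simp only [Matrix.mulVec, dotProduct, Matrix.sum_apply, Matrix.smul_apply,
          smul_eq_mul, Finset.sum_mul] at hS
        rw [hj, pow_zero, inv_one, one_mul, ← hS, Fintype.sum_prod_type_right,
          Finset.sum_comm]
        refine Finset.sum_congr rfl fun k _ => Finset.sum_congr rfl fun ℓ _ => ?_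
        beta_reduce
        ring
      · have hm : ((j : ℕ) - 1) + 1 < L + 1 := by omega
        have hjj : j = ⟨(j : ℕ) - 1 + 1, hm⟩ := by apply Fin.ext; simp; omega
        rw [hjj, delay_mulVec_succ A _ i ((j : ℕ) - 1) hm]
        simp only
        rw [pow_succ, mul_inv]
        field_simp
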